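/- For each T ∈ [0,1), the function ǧ_T : ρ ↦ (ρ/(1+T))^{1+T} · ((ρ+2)/(1−T))^{1−T} − 1 is strictly increasing on (0, +∞) with range (−1, +∞), and has a unique zero ρ̌(T) ∈ (0, +∞). Moreover, setting ř(T) = 1 + ρ̌(T), the function T ↦ ř(T) is strictly increasing on [0,1), ř(0) = √2, and ř(T) → 3 as T → 1⁻ (in particular √2 ≤ ř(T) < 3 for all T ∈ [0,1)). -/

import Mathlib

open Real Set Filter

private noncomputable def gf (T x : ℝ) : ℝ :=
  (x / (1 + T)) ^ (1 + T) * ((x + 2) / (1 - T)) ^ (1 - T)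

private lemma gf_pos {T x : ℝ} (hT0 : 0 ≤ T) (hT1 : T < 1) (hx : 0 < x) : 0 < gf T x := by
  have h1 : (0:ℝ) < 1 + T := by linarith
  have h2 : (0:ℝ) < 1 - T := by linarith
  exact mul_pos (rpow_pos_of_pos (div_pos hx h1) _)
    (rpow_pos_of_pos (div_pos (by linarith) h2) _)

private lemma gf_exp {T x : ℝ} (hT0 : 0 ≤ T) (hT1 : T < 1) (hx : 0 < x) :
    gf T x = Real.exp ((Real.log x - Real.log (1 + T)) * (1 + T)
      + (Real.log (x + 2) - Real.log (1 - T)) * (1 - T)) := by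
  have h1 : (0:ℝ) < 1 + T := by linarith
  have h2 : (0:ℝ) < 1 - T := by linarith
  have hx2 : (0:ℝ) < x + 2 := by linarith
  rw [gf, Real.rpow_def_of_pos (div_pos hx h1), Real.rpow_def_of_pos (div_pos hx2 h2),
    ← Real.exp_add, Real.log_div hx.ne' h1.ne', Real.log_div hx2.ne' h2.ne']

private lemma gf_mono {T : ℝ} (hT0 : 0 ≤ T) (hT1 : T < 1) : StrictMonoOn (gf T) (Ioi 0) := by
  have h1 : (0:ℝ) < 1 + T := by linarith
  have h2 : (0:ℝ) < 1 - T := by linarith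
  intro a ha b hb hab
  simp only [mem_Ioi] at ha hb
  have f1 : (a/(1+T))^(1+T) < (b/(1+T))^(1+T) :=
    Real.rpow_lt_rpow (by positivity) (by gcongr) h1
  have f2 : ((a+2)/(1-T))^(1-T) < ((b+2)/(1-T))^(1-T) :=
    Real.rpow_lt_rpow (by positivity) (by gcongr) h2
  exact mul_lt_mul'' f1 f2 (by positivity) (by positivity)

private lemma gf_cont {T : ℝ} (hT0 : 0 ≤ T) (hT1 : T < 1) : ContinuousOn (gf T) (Ioi 0) := by
  have h1 : (0:ℝ) < 1 + T := by linarith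
  have h2 : (0:ℝ) < 1 - T := by linarith
  apply ContinuousOn.mul
  · apply ContinuousOn.rpow_const (continuousOn_id.div_const _)
    intro x hx; exact Or.inr (by linarith)
  · apply ContinuousOn.rpow_const ((continuousOn_id.add continuousOn_const).div_const _)
    intro x hx; exact Or.inr (by linarith)

private lemma gf_small {T : ℝ} (hT0 : 0 ≤ T) (hT1 : T < 1) {y : ℝ} (hy : 0 < y) :
    ∃ x, 0 < x ∧ gf T x < y := by
  have h1 : (0:ℝ) < 1 + T := by linarith
  have h2 : (0:ℝ) < 1 - T := by linarith
  set C : ℝ := (3 / (1 - T)) ^ (1 - T) with hC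
  have hCpos : 0 < C := rpow_pos_of_pos (by positivity) _
  set x : ℝ := min 1 (y / (2 * C)) with hxdef
  have hxpos : 0 < x := lt_min one_pos (by positivity)
  have hx1 : x ≤ 1 := min_le_left _ _
  refine ⟨x, hxpos, ?_⟩
  have f1 : (x / (1 + T)) ^ (1 + T) ≤ x := by
    calc (x / (1 + T)) ^ (1 + T) ≤ x ^ (1 + T) :=
          Real.rpow_le_rpow (by positivity) (div_le_self hxpos.le (by linarith)) (by linarith)
      _ ≤ x ^ (1:ℝ) := Real.rpow_le_rpow_of_exponent_ge hxpos hx1 (by linarith)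
      _ = x := Real.rpow_one x
  have f2 : ((x + 2) / (1 - T)) ^ (1 - T) ≤ C := by
    apply Real.rpow_le_rpow (by positivity) _ (by linarith)
    gcongr
    linarith
  have : gf T x ≤ x * C := by
    apply mul_le_mul f1 f2 (by positivity) (by linarith [hxpos, hx1])
  have hxC : x * C ≤ y / 2 := by
    have : x ≤ y / (2 * C) := min_le_right _ _
    calc x * C ≤ (y / (2 * C)) * C := by gcongr
      _ = y / 2 := by field_simp
  linarith

private lemma gf_large {T : ℝ} (hT0 : 0 ≤ T) (hT1 : T < 1) (y : ℝ) :
    ∃ x, 0 < x ∧ y < gf T x := by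
  have h1 : (0:ℝ) < 1 + T := by linarith
  have h2 : (0:ℝ) < 1 - T := by linarith
  set x : ℝ := max 2 (2 * y + 2) with hxdef
  have hx2 : 2 ≤ x := le_max_left _ _
  have hxpos : 0 < x := by linarith
  refine ⟨x, hxpos, ?_⟩
  have f1 : x / 2 ≤ (x / (1 + T)) ^ (1 + T) := by
    calc x / 2 = (x / 2) ^ (1:ℝ) := (Real.rpow_one _).symm
      _ ≤ (x / 2) ^ (1 + T) :=
          Real.rpow_le_rpow_of_exponent_le (by linarith) (by linarith)
      _ ≤ (x / (1 + T)) ^ (1 + T) := by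
          apply Real.rpow_le_rpow (by positivity) _ (by linarith)
          rw [div_le_div_iff₀ (by norm_num) h1]
          nlinarith
  have f2 : (1:ℝ) ≤ ((x + 2) / (1 - T)) ^ (1 - T) := by
    apply Real.one_le_rpow _ (by linarith)
    rw [le_div_iff₀ h2]; linarith
  have : x / 2 ≤ gf T x := by
    calc x / 2 ≤ (x / (1 + T)) ^ (1 + T) := f1
      _ = (x / (1 + T)) ^ (1 + T) * 1 := (mul_one _).symm
      _ ≤ gf T x := by
          apply mul_le_mul_of_nonneg_left f2 (by positivity)
  have : 2 * y + 2 ≤ x := le_max_right _ _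
  linarith

private lemma gf_image {T : ℝ} (hT0 : 0 ≤ T) (hT1 : T < 1) :
    (fun x => gf T x - 1) '' Ioi 0 = Ioi (-1) := by
  apply Set.eq_of_subset_of_subset
  · rintro y ⟨x, hx, rfl⟩
    simp only [mem_Ioi] at hx ⊢
    linarith [gf_pos hT0 hT1 hx]
  · intro y hy
    simp only [mem_Ioi] at hy
    obtain ⟨a, ha, hga⟩ := gf_small hT0 hT1 (show (0:ℝ) < y + 1 by linarith)
    obtain ⟨b, hb, hgb⟩ := gf_large hT0 hT1 (y + 1)
    have hab : a < b := by
      by_contra h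
      push_neg at h
      rcases eq_or_lt_of_le h with rfl | h
      · linarith
      · have := gf_mono hT0 hT1 (mem_Ioi.2 hb) (mem_Ioi.2 ha) h
        linarith
    obtain ⟨x, hxm, hgx⟩ := intermediate_value_Icc hab.le
      ((gf_cont hT0 hT1).mono (fun z hz => mem_Ioi.2 (lt_of_lt_of_le ha hz.1)))
      ⟨hga.le, hgb.le⟩
    exact ⟨x, mem_Ioi.2 (lt_of_lt_of_le ha hxm.1), by simp [hgx]⟩

private lemma H_anti {x : ℝ} (hx : 0 < x) :
    StrictAntiOn (fun T : ℝ => (Real.log x - Real.log (1 + T)) * (1 + T)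
      + (Real.log (x + 2) - Real.log (1 - T)) * (1 - T)) (Ico 0 1) := by
  apply strictAntiOn_of_deriv_neg (convex_Ico 0 1)
  · apply ContinuousOn.add
    · apply ContinuousOn.mul
      · apply continuousOn_const.sub
        apply ContinuousOn.log (continuousOn_const.add continuousOn_id)
        intro t ht; simp only [mem_Ico] at ht; intro h; simp at h; linarith [ht.1]
      · exact continuousOn_const.add continuousOn_id
    · apply ContinuousOn.mul
      · apply continuousOn_const.sub
        apply ContinuousOn.log (continuousOn_const.sub continuousOn_id)
        intro t ht; simp only [mem_Ico] at ht; intro h; simp only [Pi.sub_apply, id] at h; linarith [ht.2]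
      · exact continuousOn_const.sub continuousOn_id
  · rw [interior_Ico]
    intro t ht
    simp only [mem_Ioo] at ht
    have h1 : (0:ℝ) < 1 + t := by linarith [ht.1]
    have h2 : (0:ℝ) < 1 - t := by linarith [ht.2]
    have d1 : HasDerivAt (fun T : ℝ => 1 + T) 1 t := (hasDerivAt_id t).const_add 1
    have d2 : HasDerivAt (fun T : ℝ => 1 - T) (-1) t := (hasDerivAt_id t).const_sub 1
    have dl1 : HasDerivAt (fun T : ℝ => Real.log (1 + T)) (1 / (1 + t)) t := d1.log h1.ne'
    have dl2 : HasDerivAt (fun T : ℝ => Real.log (1 - T)) ((-1) / (1 - t)) t := d2.log h2.ne'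
    have dA : HasDerivAt (fun T : ℝ => (Real.log x - Real.log (1 + T)) * (1 + T))
        (-(1 / (1 + t)) * (1 + t) + (Real.log x - Real.log (1 + t)) * 1) t :=
      (dl1.const_sub (Real.log x)).mul d1
    have dB : HasDerivAt (fun T : ℝ => (Real.log (x + 2) - Real.log (1 - T)) * (1 - T))
        (-((-1) / (1 - t)) * (1 - t) + (Real.log (x + 2) - Real.log (1 - t)) * (-1)) t :=
      (dl2.const_sub (Real.log (x + 2))).mul d2
    have dH := dA.add dB
    rw [show deriv (fun T : ℝ => (Real.log x - Real.log (1 + T)) * (1 + T)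
      + (Real.log (x + 2) - Real.log (1 - T)) * (1 - T)) t = _ from dH.deriv]
    have e1 : (1 / (1 + t)) * (1 + t) = 1 := by field_simp
    have e2 : ((-1) / (1 - t)) * (1 - t) = -1 := by field_simp
    have l1 : Real.log x < Real.log (x + 2) := Real.log_lt_log hx (by linarith)
    have l2 : Real.log (1 - t) < Real.log (1 + t) := Real.log_lt_log h2 (by linarith [ht.1])
    nlinarith [e1, e2, l1, l2]

private lemma gf_anti {x : ℝ} (hx : 0 < x) {T₁ T₂ : ℝ} (h1 : T₁ ∈ Ico (0:ℝ) 1)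
    (h2 : T₂ ∈ Ico (0:ℝ) 1) (h12 : T₁ < T₂) : gf T₂ x < gf T₁ x := by
  rw [gf_exp h2.1 h2.2 hx, gf_exp h1.1 h1.2 hx]
  exact Real.exp_lt_exp.2 (H_anti hx h1 h2 h12)

private lemma gf2_gt_one {T : ℝ} (hT0 : 0 ≤ T) (hT1 : T < 1) : 1 < gf T 2 := by
  have h1 : (0:ℝ) < 1 + T := by linarith
  have h2 : (0:ℝ) < 1 - T := by linarith
  rw [gf_exp hT0 hT1 (by norm_num)]
  apply Real.one_lt_exp_iff.2
  have l4 : Real.log (2 + 2) = 2 * Real.log 2 := by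
    rw [show (2:ℝ) + 2 = 2 ^ 2 by norm_num, Real.log_pow]; push_cast; ring
  have l1 : Real.log (1 + T) ≤ Real.log 2 := Real.log_le_log h1 (by linarith)
  have l2 : Real.log (1 - T) ≤ 0 := Real.log_nonpos (by linarith) (by linarith)
  have l3 : 0 < Real.log 2 := Real.log_pos (by norm_num)
  rw [l4]
  nlinarith

private lemma gf_eventually_lt {c : ℝ} (hc0 : 0 < c) (hc2 : c < 2) :
    ∀ᶠ T in nhdsWithin (1:ℝ) (Iio 1), (0 < T → T < 1 → gf T c < 1) := by
  set F : ℝ → ℝ := fun T => (Real.log c - Real.log (1 + T)) * (1 + T)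
      + (Real.log (c + 2) - Real.log (1 - T)) * (1 - T) with hF
  have t1 : Tendsto (fun T : ℝ => (Real.log c - Real.log (1 + T)) * (1 + T)
      + Real.log (c + 2) * (1 - T)) (nhdsWithin (1:ℝ) (Iio 1))
      (nhds ((Real.log c - Real.log 2) * 2)) := by
    have hcont : ContinuousAt (fun T : ℝ => (Real.log c - Real.log (1 + T)) * (1 + T)
        + Real.log (c + 2) * (1 - T)) 1 := by
      apply ContinuousAt.add
      · exact ((continuousAt_const.sub (((continuousAt_const.add continuousAt_id)).log
          (by norm_num))).mul (continuousAt_const.add continuousAt_id))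
      · exact continuousAt_const.mul (continuousAt_const.sub continuousAt_id)
    have := hcont.tendsto.mono_left (nhdsWithin_le_nhds (s := Iio (1:ℝ)))
    norm_num at this ⊢
    exact this
  have hsub : Tendsto (fun T : ℝ => 1 - T) (nhdsWithin (1:ℝ) (Iio 1))
      (nhdsWithin (0:ℝ) (Ioi 0)) := by
    rw [tendsto_nhdsWithin_iff]
    constructor
    · have : Tendsto (fun T : ℝ => 1 - T) (nhds 1) (nhds 0) := by
        have h := ((continuous_const (y := (1:ℝ))).sub continuous_id).tendsto (1:ℝ)
        norm_num at h
        exact h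
      exact this.mono_left nhdsWithin_le_nhds
    · filter_upwards [self_mem_nhdsWithin] with t ht
      simp only [mem_Iio] at ht
      simp only [mem_Ioi]
      linarith
  have t3 : Tendsto (fun T : ℝ => Real.log (1 - T) * (1 - T)) (nhdsWithin (1:ℝ) (Iio 1))
      (nhds 0) := by
    have h := (tendsto_log_mul_rpow_nhdsGT_zero one_pos).comp hsub
    simp only [Function.comp_def, Real.rpow_one] at h
    exact h
  have tF : Tendsto F (nhdsWithin (1:ℝ) (Iio 1)) (nhds ((Real.log c - Real.log 2) * 2)) := by
    have := t1.sub t3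
    rw [sub_zero] at this
    apply this.congr
    intro T
    simp only [hF]
    ring
  have hL : (Real.log c - Real.log 2) * 2 < 0 := by
    have := Real.log_lt_log hc0 hc2
    linarith
  filter_upwards [tF.eventually_lt_const hL] with T hT h0 h1'
  rw [gf_exp h0.le h1' hc0]
  exact Real.exp_lt_one_iff.2 hT

/-- (Part of Lemma 3.1) For `T ∈ [0,1)`, the function
`ǧ_T : ρ ↦ (ρ/(1+T))^{1+T}((ρ+2)/(1-T))^{1-T} - 1` is strictly increasing on `(0,∞)`
with range `(-1,∞)` and has a unique positive zero `ρ̌(T)`; moreover `ř(T) = 1 + ρ̌(T)`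
is strictly increasing in `T`, `ř(0) = √2`, `ř(T) → 3` as `T → 1⁻`, and
`√2 ≤ ř(T) < 3`. -/
theorem statement_10 (ρ : ℝ → ℝ)
    (hρ : ∀ T ∈ Set.Ico (0 : ℝ) 1, ρ T ∈ Set.Ioi (0 : ℝ) ∧
      (ρ T / (1 + T)) ^ (1 + T) * ((ρ T + 2) / (1 - T)) ^ (1 - T) - 1 = 0) :
    (∀ T ∈ Set.Ico (0 : ℝ) 1,
      StrictMonoOn (fun ρ' : ℝ => (ρ' / (1 + T)) ^ (1 + T) * ((ρ' + 2) / (1 - T)) ^ (1 - T) - 1)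
        (Set.Ioi 0) ∧
      (fun ρ' : ℝ => (ρ' / (1 + T)) ^ (1 + T) * ((ρ' + 2) / (1 - T)) ^ (1 - T) - 1) ''
          Set.Ioi 0 = Set.Ioi (-1) ∧
      (∃! ρ' : ℝ, ρ' ∈ Set.Ioi (0 : ℝ) ∧
        (ρ' / (1 + T)) ^ (1 + T) * ((ρ' + 2) / (1 - T)) ^ (1 - T) - 1 = 0)) ∧
    StrictMonoOn (fun T => 1 + ρ T) (Set.Ico (0 : ℝ) 1) ∧
    1 + ρ 0 = Real.sqrt 2 ∧
    Filter.Tendsto (fun T => 1 + ρ T) (nhdsWithin 1 (Set.Iio 1)) (nhds 3) ∧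
    ∀ T ∈ Set.Ico (0 : ℝ) 1, Real.sqrt 2 ≤ 1 + ρ T ∧ 1 + ρ T < 3 := by
  have key : ∀ T ∈ Set.Ico (0:ℝ) 1, 0 < ρ T ∧ gf T (ρ T) = 1 := by
    intro T hT
    obtain ⟨h1, h2⟩ := hρ T hT
    refine ⟨h1, ?_⟩
    have : gf T (ρ T) - 1 = 0 := h2
    linarith
  have hub : ∀ T ∈ Set.Ico (0:ℝ) 1, ρ T < 2 := by
    intro T hT
    by_contra h
    push_neg at h
    have := (gf_mono hT.1 hT.2).monotoneOn (mem_Ioi.2 two_pos) (mem_Ioi.2 (key T hT).1) h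
    rw [(key T hT).2] at this
    exact absurd this (not_le.2 (gf2_gt_one hT.1 hT.2))
  have hmono : StrictMonoOn (fun T => 1 + ρ T) (Set.Ico (0:ℝ) 1) := by
    intro T1 h1 T2 h2 h12
    have k1 := key T1 h1
    have k2 := key T2 h2
    have hlt : gf T2 (ρ T1) < 1 := by
      have := gf_anti k1.1 h1 h2 h12
      rw [k1.2] at this
      exact this
    have : ρ T1 < ρ T2 := by
      by_contra h
      push_neg at h
      have := (gf_mono h2.1 h2.2).monotoneOn (mem_Ioi.2 k2.1) (mem_Ioi.2 k1.1) h
      rw [k2.2] at this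
      linarith
    simpa using this
  have hρ0 : 1 + ρ 0 = Real.sqrt 2 := by
    have k := key 0 ⟨le_refl 0, one_pos⟩
    have h1 : ρ 0 * (ρ 0 + 2) = 1 := by
      have h := k.2
      simp only [gf] at h
      norm_num at h
      exact h
    have hsq : (1 + ρ 0)^2 = 2 := by nlinarith
    have hpos : (0:ℝ) < 1 + ρ 0 := by linarith [k.1]
    rw [show (2:ℝ) = (1 + ρ 0)^2 from hsq.symm, Real.sqrt_sq hpos.le]
  have hevpos : ∀ᶠ T in nhdsWithin (1:ℝ) (Iio 1), 0 < T :=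
    (eventually_gt_nhds one_pos).filter_mono nhdsWithin_le_nhds
  have hts : Filter.Tendsto (fun T => 1 + ρ T) (nhdsWithin (1:ℝ) (Iio 1)) (nhds 3) := by
    rw [tendsto_order]
    constructor
    · intro b hb
      rcases le_or_gt b 1 with h | h
      · filter_upwards [self_mem_nhdsWithin, hevpos] with T hT1 hT0
        simp only [mem_Iio] at hT1
        have := (key T ⟨hT0.le, hT1⟩).1
        linarith
      · have hc0 : 0 < b - 1 := by linarith
        have hc2 : b - 1 < 2 := by linarith
        filter_upwards [gf_eventually_lt hc0 hc2, self_mem_nhdsWithin, hevpos]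
          with T h2 h3 h4
        simp only [mem_Iio] at h3
        have hTm : T ∈ Set.Ico (0:ℝ) 1 := ⟨h4.le, h3⟩
        have k := key T hTm
        have : b - 1 < ρ T := by
          by_contra hcon
          push_neg at hcon
          have hle := (gf_mono hTm.1 hTm.2).monotoneOn (mem_Ioi.2 k.1) (mem_Ioi.2 hc0) hcon
          rw [k.2] at hle
          linarith [h2 h4 h3]
        linarith
    · intro b hb
      filter_upwards [self_mem_nhdsWithin, hevpos] with T h3 h4
      simp only [mem_Iio] at h3
      have := hub T ⟨h4.le, h3⟩
      linarith
  refine ⟨?_, hmono, hρ0, hts, ?_⟩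
  · intro T hT
    obtain ⟨hT0, hT1⟩ := hT
    have hTm : T ∈ Set.Ico (0:ℝ) 1 := ⟨hT0, hT1⟩
    refine ⟨?_, ?_, ?_⟩
    · intro a ha b hb hab
      exact sub_lt_sub_right (gf_mono hT0 hT1 ha hb hab) 1
    · exact gf_image hT0 hT1
    · have k := key T hTm
      refine ⟨ρ T, ⟨mem_Ioi.2 k.1, ?_⟩, ?_⟩
      · show gf T (ρ T) - 1 = 0
        rw [k.2]; ring
      · rintro y ⟨hy1, hy2⟩
        apply (gf_mono hT0 hT1).injOn hy1 (mem_Ioi.2 k.1)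
        have : gf T y - 1 = 0 := hy2
        rw [k.2]
        linarith
  · intro T hT
    constructor
    · rcases eq_or_lt_of_le hT.1 with h | h
      · rw [← hρ0, ← h]
      · rw [← hρ0]
        exact (hmono ⟨le_refl 0, one_pos⟩ hT h).le
    · linarith [hub T hT]
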